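/- Let a, b > 0 and let (t_n) be a strictly decreasing sequence of real numbers in (0,1) converging to 0. Let ã₁ = (a+t₁, a+t₂, …, a+t_n, …) and ã₂ = (b−t₁, b−t₂, …, b−t_n, …) be the corresponding elements of ℓ∞, and let 𝒜 = {ã₁, ã₂}. Then every element of 𝒮̄ satisfies the weak *-Property, while the elements of 𝒮̄ satisfying the *-Property are exactly (a+t₁, b−t₁) and (a, b). -/
import Mathlib


open scoped ENNReal

noncomputable section

/-- `ℓ∞`, the space of bounded real sequences with the supremum norm. -/
abbrev Linf : Type := lp (fun _ : ℕ => ℝ) ∞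

/-- The `i`-th component of the family `a = {ã₁, …, ã_m}`. -/
def component {m : ℕ} (a : Fin m → Linf) (i : ℕ) : Fin m → ℝ :=
  fun k => a k i

/-- `𝒮̄`, the closure (in `ℝ^m`) of the set of all components of the family `a`. -/
def SbarSet {m : ℕ} (a : Fin m → Linf) : Set (Fin m → ℝ) :=
  closure (Set.range (component a))

/-- The equivalence class `E_x = {b ∈ 𝒮̄ : b = ±x}`. -/
def EquivClass {m : ℕ} (a : Fin m → Linf) (x : Fin m → ℝ) : Set (Fin m → ℝ) :=
  {b ∈ SbarSet a | b = x ∨ b = -x}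

/-- `x ∈ 𝒮̄` satisfies the weak `*`-Property: there is `β ∈ ℝ^m` with
`|∑ β_k x̂_k| ≥ sup {|∑ β_k b̂_k| : b ∈ 𝒮̄ \ E_x}`. -/
def WeakStarProp {m : ℕ} (a : Fin m → Linf) (x : Fin m → ℝ) : Prop :=
  x ∈ SbarSet a ∧ ∃ β : Fin m → ℝ,
    ∀ b ∈ SbarSet a \ EquivClass a x, |∑ k, β k * b k| ≤ |∑ k, β k * x k|

/-- `x ∈ 𝒮̄` satisfies the `*`-Property: there is `β ∈ ℝ^m` with
`|∑ β_k x̂_k| > |∑ β_k b̂_k|` for every `b ∈ 𝒮̄ \ E_x`. -/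
def StarProp {m : ℕ} (a : Fin m → Linf) (x : Fin m → ℝ) : Prop :=
  x ∈ SbarSet a ∧ ∃ β : Fin m → ℝ,
    ∀ b ∈ SbarSet a \ EquivClass a x, |∑ k, β k * b k| < |∑ k, β k * x k|

/-- for `ã₁ = (a + t₁, a + t₂, …)` and `ã₂ = (b − t₁, b − t₂, …)` with
`a, b > 0` and `(t_n)` strictly decreasing in `(0,1)` with `t_n → 0`, every element of `𝒮̄`
satisfies the weak `*`-Property, and the elements of `𝒮̄` satisfying the `*`-Property are
exactly `(a + t₁, b − t₁)` and `(a, b)`. -/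
theorem stmt0 (a b : ℝ) (ha : 0 < a) (hb : 0 < b)
    (t : ℕ → ℝ) (ht01 : ∀ n, t n ∈ Set.Ioo (0 : ℝ) 1) (htanti : StrictAnti t)
    (htlim : Filter.Tendsto t Filter.atTop (nhds 0))
    (A : Fin 2 → Linf) (hA0 : ∀ i : ℕ, A 0 i = a + t i) (hA1 : ∀ i : ℕ, A 1 i = b - t i) :
    (∀ x ∈ SbarSet A, WeakStarProp A x) ∧
    (∀ x ∈ SbarSet A, (StarProp A x ↔ x = ![a + t 0, b - t 0] ∨ x = ![a, b])) := by
  have ht0 : ∀ n, 0 < t n := fun n => (ht01 n).1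
  have ht1 : ∀ n, t n < 1 := fun n => (ht01 n).2
  have hcomp : ∀ i, component A i = ![a + t i, b - t i] := by
    intro i; funext k
    fin_cases k
    · simp [component, hA0]
    · simp [component, hA1]
  have htend : Filter.Tendsto (component A) Filter.atTop (nhds ![a, b]) := by
    rw [tendsto_pi_nhds]
    intro k
    fin_cases k
    · have h0 : (fun n => component A n 0) = fun n => a + t n :=
        funext fun n => by simp [component, hA0]
      show Filter.Tendsto (fun n => component A n 0) Filter.atTop (nhds (![a,b] 0))
      rw [h0]
      simpa using tendsto_const_nhds.add htlim
    · have h1 : (fun n => component A n 1) = fun n => b - t n :=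
        funext fun n => by simp [component, hA1]
      show Filter.Tendsto (fun n => component A n 1) Filter.atTop (nhds (![a,b] 1))
      rw [h1]
      simpa using tendsto_const_nhds.sub htlim
  have hmemp : (![a, b] : Fin 2 → ℝ) ∈ SbarSet A :=
    mem_closure_of_tendsto htend (Filter.Eventually.of_forall fun n => Set.mem_range_self n)
  have hK : IsCompact (insert ![a, b] (Set.range (component A))) :=
    htend.isCompact_insert_range
  have hSbar : SbarSet A = insert ![a, b] (Set.range (component A)) :=
    Set.Subset.antisymm (closure_minimal (Set.subset_insert _ _) hK.isClosed)
      (Set.insert_subset hmemp subset_closure)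
  have hmem : ∀ x, x ∈ SbarSet A → x = ![a, b] ∨ ∃ i, x = ![a + t i, b - t i] := by
    intro x hx
    rw [hSbar] at hx
    rcases hx with h | ⟨i, rfl⟩
    · exact Or.inl h
    · exact Or.inr ⟨i, hcomp i⟩
  have hmem' : ∀ i, (![a + t i, b - t i] : Fin 2 → ℝ) ∈ SbarSet A := by
    intro i
    rw [hSbar]
    exact Set.mem_insert_of_mem _ ⟨i, hcomp i⟩
  have hsum : ∀ (β y : Fin 2 → ℝ), (∑ k, β k * y k) = β 0 * y 0 + β 1 * y 1 :=
    fun β y => Fin.sum_univ_two _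
  -- sum of coordinates is constant on Sbar
  have hab : ∀ z ∈ SbarSet A, z 0 + z 1 = a + b := by
    intro z hz
    rcases hmem z hz with rfl | ⟨i, rfl⟩
    · simp
    · simp only [Matrix.cons_val_zero, Matrix.cons_val_one, Matrix.head_cons]; ring
  constructor
  · -- weak star property for everyone
    intro x hx
    refine ⟨hx, ![1, 1], fun y hy => ?_⟩
    rw [hsum, hsum]
    simp only [Matrix.cons_val_zero, Matrix.cons_val_one, Matrix.head_cons, one_mul]
    rw [hab y hy.1, hab x hx]
  · intro x hx
    constructor
    · -- forward: StarProp implies x is one of the two special points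
      rintro ⟨-, β, hβ⟩
      rcases hmem x hx with rfl | ⟨i, rfl⟩
      · exact Or.inr rfl
      rcases Nat.eq_zero_or_pos i with rfl | hi
      · exact Or.inl rfl
      exfalso
      obtain ⟨n, rfl⟩ := Nat.exists_eq_succ_of_ne_zero hi.ne'
      set c : ℝ := β 0 * a + β 1 * b with hc
      set d : ℝ := β 0 - β 1 with hd
      have hval : ∀ j, (∑ k, β k * (![a + t j, b - t j] : Fin 2 → ℝ) k) = c + d * t j := by
        intro j
        rw [hsum]
        simp only [Matrix.cons_val_zero, Matrix.cons_val_one, Matrix.head_cons, hc, hd]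
        ring
      have hvalp : (∑ k, β k * (![a, b] : Fin 2 → ℝ) k) = c := by
        rw [hsum]
        simp [hc]
      have htn : t (n + 1) < t n := htanti (Nat.lt_succ_self n)
      -- (a, b) is not equivalent to x
      have h1 : |c| < |c + d * t (n + 1)| := by
        have hne : (![a, b] : Fin 2 → ℝ) ∉ EquivClass A ![a + t (n+1), b - t (n+1)] := by
          rintro ⟨-, h | h⟩
          · have := congrFun h 0
            simp at this
            linarith [ht0 (n+1)]
          · have := congrFun h 0
            simp at this
            linarith [ht0 (n+1)]
        have := hβ ![a, b] ⟨hmemp, hne⟩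
        rwa [hvalp, hval] at this
      -- the previous component is not equivalent to x
      have h2 : |c + d * t n| < |c + d * t (n + 1)| := by
        have hne : (![a + t n, b - t n] : Fin 2 → ℝ) ∉
            EquivClass A ![a + t (n+1), b - t (n+1)] := by
          rintro ⟨-, h | h⟩
          · have := congrFun h 0
            simp at this
            linarith
          · have := congrFun h 0
            simp at this
            linarith [ht0 (n+1), ht0 n]
        have := hβ ![a + t n, b - t n] ⟨hmem' n, hne⟩
        rwa [hval, hval] at this
      -- convexity contradiction
      set u : ℝ := t (n + 1) / t n with hu
      have hu0 : 0 < u := div_pos (ht0 _) (ht0 _)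
      have hu1 : u < 1 := (div_lt_one (ht0 n)).2 htn
      have hut : u * t n = t (n + 1) := div_mul_cancel₀ _ (ht0 n).ne'
      have hcomb : c + d * t (n + 1) = (1 - u) * c + u * (c + d * t n) := by
        rw [← hut]; ring
      have hle : |c + d * t (n + 1)| ≤ (1 - u) * |c| + u * |c + d * t n| := by
        calc |c + d * t (n + 1)| = |(1 - u) * c + u * (c + d * t n)| := by rw [hcomb]
          _ ≤ |(1 - u) * c| + |u * (c + d * t n)| := abs_add_le _ _
          _ = (1 - u) * |c| + u * |c + d * t n| := by
              rw [abs_mul, abs_mul, abs_of_pos (by linarith), abs_of_pos hu0]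
      nlinarith [mul_lt_mul_of_pos_left h1 (by linarith : (0:ℝ) < 1 - u),
        mul_lt_mul_of_pos_left h2 hu0]
    · -- backward: the two special points satisfy StarProp
      rintro (rfl | rfl)
      · -- x = (a + t 0, b - t 0), take β = (1, 0)
        refine ⟨hx, ![1, 0], fun y hy => ?_⟩
        rw [hsum, hsum]
        simp only [Matrix.cons_val_zero, Matrix.cons_val_one, Matrix.head_cons, one_mul,
          zero_mul, add_zero]
        have hpos : (0:ℝ) < a + t 0 := by linarith [ht0 0]
        rw [abs_of_pos hpos]
        rcases hmem y hy.1 with rfl | ⟨i, rfl⟩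
        · simp only [Matrix.cons_val_zero]
          rw [abs_of_pos ha]
          linarith [ht0 0]
        · rcases Nat.eq_zero_or_pos i with rfl | hi
          · exact absurd ⟨hy.1, Or.inl rfl⟩ hy.2
          · simp only [Matrix.cons_val_zero]
            rw [abs_of_pos (by linarith [ht0 i])]
            linarith [htanti hi]
      · -- x = (a, b), take β = (1, 1 + a)
        refine ⟨hx, ![1, 1 + a], fun y hy => ?_⟩
        rw [hsum, hsum]
        simp only [Matrix.cons_val_zero, Matrix.cons_val_one, Matrix.head_cons, one_mul]
        have hcpos : (0:ℝ) < a + (1 + a) * b := by nlinarith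
        rcases hmem y hy.1 with rfl | ⟨i, rfl⟩
        · exact absurd ⟨hy.1, Or.inl rfl⟩ hy.2
        · simp only [Matrix.cons_val_zero, Matrix.cons_val_one, Matrix.head_cons]
          have h01 : 0 < a * t i := mul_pos ha (ht0 i)
          have h02 : a * t i < a := by nlinarith [ht1 i, ht0 i]
          have habs : a + t i + (1 + a) * (b - t i) = (a + (1 + a) * b) - a * t i := by ring
          rw [habs, abs_of_pos hcpos]
          rw [abs_lt]
          constructor <;> nlinarith
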